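/- An alternating data automaton A has empty language if and only if A admits a safety invariant, i.e., a function I from Boolean state valuations to sets of data valuations such that (1) for every event sequence u and every valuation (β,ν) satisfying Post_A(ι,u) we have ν ∈ I(β), and (2) for every β, ν with ν ∈ I(β) and every u, (β,ν) does not satisfy Accept_A(u). -/

import Mathlib

/-- Positive Boolean formulas over variables `V` (occurring only positively)
and atoms `A` (which may occur negated, via `natom`). -/
inductive BForm (V A : Type) : Type
  | tru : BForm V A
  | fls : BForm V A
  | var (v : V) : BForm V A
  | atom (a : A) : BForm V A
  | natom (a : A) : BForm V A
  | and (f g : BForm V A) : BForm V A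
  | or (f g : BForm V A) : BForm V A

namespace BForm

variable {V A B W : Type}

/-- Satisfaction of a formula under a valuation `β` of the variables and `ι` of the atoms. -/
def Eval (β : V → Prop) (ι : A → Prop) : BForm V A → Prop
  | tru => True
  | fls => False
  | var v => β v
  | atom a => ι a
  | natom a => ¬ ι a
  | and f g => Eval β ι f ∧ Eval β ι g
  | or f g => Eval β ι f ∨ Eval β ι g

/-- The dual formula: swap `∧`/`∨`, fix variables, negate atoms. -/
def dual : BForm V A → BForm V A
  | tru => fls
  | fls => tru
  | var v => var v
  | atom a => natom a
  | natom a => atom a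
  | and f g => or (dual f) (dual g)
  | or f g => and (dual f) (dual g)

/-- Number of symbols of a formula. -/
def size : BForm V A → Nat
  | tru => 1
  | fls => 1
  | var _ => 1
  | atom _ => 1
  | natom _ => 1 + 1
  | and f g => size f + size g + 1
  | or f g => size f + size g + 1

/-- Simultaneous substitution of the variables by formulas. -/
def subst (Δ : V → BForm V A) : BForm V A → BForm V A
  | tru => tru
  | fls => fls
  | var v => Δ v
  | atom a => atom a
  | natom a => natom a
  | and f g => and (subst Δ f) (subst Δ g)
  | or f g => or (subst Δ f) (subst Δ g)

/-- Renaming of variables. -/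
def rename (h : V → W) : BForm V A → BForm W A
  | tru => tru
  | fls => fls
  | var v => var (h v)
  | atom a => atom a
  | natom a => natom a
  | and f g => and (rename h f) (rename h g)
  | or f g => or (rename h f) (rename h g)

/-- Renaming of atoms. -/
def mapAtom (h : A → B) : BForm V A → BForm V B
  | tru => tru
  | fls => fls
  | var v => var v
  | atom a => atom (h a)
  | natom a => natom (h a)
  | and f g => and (mapAtom h f) (mapAtom h g)
  | or f g => or (mapAtom h f) (mapAtom h g)

end BForm
/-- An alternating data automaton over states `Q`, input events `E`, data
variables `X` and data domain `D`.  A transition formula is a positive Boolean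
formula over the states whose atoms are constraints relating the previous
(`x̄`) and current (`x`) data valuations. -/
structure ADA (Q E X D : Type) where
  /-- the initial configuration `ι ∈ Form⁺(Q, ∅)` -/
  init : BForm Q Empty
  /-- the final states -/
  final : Q → Prop
  /-- the transition function `Δ` -/
  tr : Q → E → BForm Q ((X → D) → (X → D) → Prop)

namespace ADA

variable {Q Q₁ Q₂ E X D : Type}

/-- Top-down acceptance semantics: `Sem M w prev q` holds iff the automaton,
started in state `q` with previous data valuation `prev`, accepts the rest of
the data word `w`. -/
def Sem (M : ADA Q E X D) : List (E × (X → D)) → (X → D) → Q → Prop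
  | [], _, q => M.final q
  | (a, ν) :: w, prev, q =>
      BForm.Eval (fun q' => Sem M w ν q') (fun p => p prev ν) (M.tr q a)

/-- The language of an ADA: the initial data values are unconstrained. -/
def lang (M : ADA Q E X D) : Set (List (E × (X → D))) :=
  { w | ∃ ν₀ : X → D, BForm.Eval (fun q => Sem M w ν₀ q) Empty.elim M.init }

/-- The union automaton: disjoint union of states, disjunction of initial
configurations, union of final states and of transition functions. -/
def union (M₁ : ADA Q₁ E X D) (M₂ : ADA Q₂ E X D) : ADA (Q₁ ⊕ Q₂) E X D where
  init := .or (M₁.init.rename Sum.inl) (M₂.init.rename Sum.inr)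
  final := Sum.elim M₁.final M₂.final
  tr := fun q a =>
    match q with
    | .inl q => (M₁.tr q a).rename Sum.inl
    | .inr q => (M₂.tr q a).rename Sum.inr

/-- The intersection automaton: disjoint union of states, conjunction of
initial configurations, union of final states and of transition functions. -/
def inter (M₁ : ADA Q₁ E X D) (M₂ : ADA Q₂ E X D) : ADA (Q₁ ⊕ Q₂) E X D where
  init := .and (M₁.init.rename Sum.inl) (M₂.init.rename Sum.inr)
  final := Sum.elim M₁.final M₂.final
  tr := fun q a =>
    match q with
    | .inl q => (M₁.tr q a).rename Sum.inl
    | .inr q => (M₂.tr q a).rename Sum.inr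

/-- The complement automaton: dual initial configuration, complemented final
states, dual transition formulas. -/
def compl (M : ADA Q E X D) : ADA Q E X D where
  init := M.init.dual
  final := fun q => ¬ M.final q
  tr := fun q a => (M.tr q a).dual

end ADA
namespace ADA

variable {Q E X D : Type}

/-- Semantic configurations: sets of pairs of a Boolean valuation of the states
and a data valuation. -/
abbrev Conf (Q X D : Type) := (Q → Prop) → (X → D) → Prop

/-- The one-step post-image `Post_M(φ, a) = ∃x̄. Δ(φ[x̄/x], a)`:
each state `q` of `φ` is replaced by `Δ(q,a)` and the previous data values are
projected out existentially. -/
def post (M : ADA Q E X D) (C : Conf Q X D) (a : E) : Conf Q X D :=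
  fun β ν => ∃ νp : X → D,
    C (fun q => BForm.Eval β (fun p => p νp ν) (M.tr q a)) νp

/-- The post-image along a finite sequence of input events:
`Post_M(φ, ε) = φ` and `Post_M(φ, u·a) = Post_M(Post_M(φ, u), a)`. -/
def postSeq (M : ADA Q E X D) (C : Conf Q X D) (u : List E) : Conf Q X D :=
  u.foldl (post M) C

/-- The semantic configuration of the initial formula `ι` (no data constraints). -/
def initConf (M : ADA Q E X D) : Conf Q X D :=
  fun β _ => BForm.Eval β Empty.elim M.init

/-- `Accept_M(u) = Post_M(ι,u) ∧ ⋀_{q ∈ Q∖F} (q → ⊥)`. -/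
def AcceptF (M : ADA Q E X D) (u : List E) (β : Q → Prop) (ν : X → D) : Prop :=
  postSeq M (initConf M) u β ν ∧ ∀ q : Q, ¬ M.final q → ¬ β q

end ADA

namespace SafetyAux

open BForm ADA

variable {Q E X D : Type}

theorem eval_mono {V A : Type} {β β' : V → Prop} (h : ∀ v, β v → β' v) (ι : A → Prop) :
    ∀ f : BForm V A, BForm.Eval β ι f → BForm.Eval β' ι f := by
  intro f
  induction f with
  | tru => simp [BForm.Eval]
  | fls => simp [BForm.Eval]
  | var v => exact h v
  | atom a => exact id
  | natom a => exact id
  | and f g ihf ihg => exact fun ⟨hf, hg⟩ => ⟨ihf hf, ihg hg⟩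
  | or f g ihf ihg => exact fun hfg => hfg.imp ihf ihg

/-- Like `Sem`, but with an arbitrary terminal state predicate `β`. -/
def SemB (M : ADA Q E X D) (β : Q → Prop) : List (E × (X → D)) → (X → D) → Q → Prop
  | [], _, q => β q
  | (a, ν) :: w, prev, q =>
      BForm.Eval (fun q' => SemB M β w ν q') (fun p => p prev ν) (M.tr q a)

theorem sem_eq_semB (M : ADA Q E X D) :
    ∀ (w : List (E × (X → D))) (prev : X → D) (q : Q),
      M.Sem w prev q = SemB M M.final w prev q := by
  intro w
  induction w with
  | nil => intro prev q; rfl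
  | cons p w ih =>
      obtain ⟨a, ν⟩ := p
      intro prev q
      have : (fun q' => M.Sem w ν q') = fun q' => SemB M M.final w ν q' :=
        funext fun q' => ih ν q'
      simp only [ADA.Sem, SemB, this]

theorem semB_mono (M : ADA Q E X D) {β β' : Q → Prop} (h : ∀ q, β q → β' q) :
    ∀ (w : List (E × (X → D))) (prev : X → D) (q : Q),
      SemB M β w prev q → SemB M β' w prev q := by
  intro w
  induction w with
  | nil => exact fun prev q hq => h q hq
  | cons p w ih =>
      obtain ⟨a, ν⟩ := p
      intro prev q
      exact eval_mono (fun q' => ih ν q') _ _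

/-- The last data valuation of a data word, with default `d`. -/
def lastD : List (E × (X → D)) → (X → D) → (X → D)
  | [], d => d
  | (_, ν) :: w, _ => lastD w ν

/-- Characterization of the iterated post-image. -/
theorem postSeq_iff (M : ADA Q E X D) :
    ∀ (u : List E) (C : Conf Q X D) (β : Q → Prop) (ν : X → D),
      ADA.postSeq M C u β ν ↔
        ∃ (w : List (E × (X → D))) (ν₀ : X → D),
          w.map Prod.fst = u ∧ lastD w ν₀ = ν ∧ C (SemB M β w ν₀) ν₀ := by
  intro u
  induction u with
  | nil =>
      intro C β ν
      constructor
      · intro h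
        exact ⟨[], ν, rfl, rfl, h⟩
      · rintro ⟨w, ν₀, hmap, hlast, hC⟩
        have hw : w = [] := List.map_eq_nil_iff.mp hmap
        subst hw
        cases hlast
        exact hC
  | cons a u ih =>
      intro C β ν
      show ADA.postSeq M (ADA.post M C a) u β ν ↔ _
      rw [ih]
      constructor
      · rintro ⟨w', ν₁, hmap, hlast, νp, hC⟩
        exact ⟨(a, ν₁) :: w', νp, by simp [hmap], hlast, hC⟩
      · rintro ⟨w, ν₀, hmap, hlast, hC⟩
        cases w with
        | nil => simp at hmap
        | cons p w' =>
            obtain ⟨a', ν₁⟩ := p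
            simp only [List.map_cons, List.cons.injEq] at hmap
            obtain ⟨ha, hmap'⟩ := hmap
            subst ha
            exact ⟨w', ν₁, hmap', hlast, ν₀, hC⟩

theorem nonempty_iff_accept (M : ADA Q E X D) :
    (∃ w, w ∈ M.lang) ↔ ∃ (u : List E) (β : Q → Prop) (ν : X → D), M.AcceptF u β ν := by
  constructor
  · rintro ⟨w, ν₀, hw⟩
    refine ⟨w.map Prod.fst, M.final, lastD w ν₀, ?_, fun q h => h⟩
    rw [postSeq_iff]
    refine ⟨w, ν₀, rfl, rfl, ?_⟩
    show BForm.Eval _ Empty.elim M.init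
    exact eval_mono (fun q hq => (sem_eq_semB M w ν₀ q) ▸ hq) _ _ hw
  · rintro ⟨u, β, ν, hpost, hfin⟩
    rw [postSeq_iff] at hpost
    obtain ⟨w, ν₀, hmap, hlast, hC⟩ := hpost
    refine ⟨w, ν₀, ?_⟩
    have hmono : ∀ q, SemB M β w ν₀ q → SemB M M.final w ν₀ q :=
      fun q => semB_mono M (fun q' hq' => by by_contra hqf; exact hfin q' hqf hq') w ν₀ q
    have : BForm.Eval (fun q => SemB M M.final w ν₀ q) Empty.elim M.init :=
      eval_mono hmono _ _ hC
    exact eval_mono (fun q hq => (sem_eq_semB M w ν₀ q) ▸ hq) _ _ this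

end SafetyAux

/-- An alternating data automaton has empty language iff it
admits a safety invariant: a map `I` from Boolean state valuations to sets of
data valuations such that (1) every valuation satisfying some post-image
`Post_M(ι, u)` belongs to the invariant, and (2) no valuation in the invariant
satisfies any acceptance condition `Accept_M(u)`. -/
theorem lang_empty_iff_safety_invariant {Q E X D : Type} (M : ADA Q E X D) :
    ADA.lang M = ∅ ↔
      ∃ I : (Q → Prop) → Set (X → D),
        (∀ (u : List E) (β : Q → Prop) (ν : X → D),
          ADA.postSeq M (ADA.initConf M) u β ν → ν ∈ I β) ∧
        (∀ (β : Q → Prop) (ν : X → D), ν ∈ I β →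
          ∀ u : List E, ¬ ADA.AcceptF M u β ν) := by
  constructor
  · intro h
    refine ⟨fun _ => Set.univ, fun _ _ _ _ => trivial, ?_⟩
    intro β ν _ u hacc
    have : ∃ w, w ∈ M.lang := (SafetyAux.nonempty_iff_accept M).mpr ⟨u, β, ν, hacc⟩
    obtain ⟨w, hw⟩ := this
    rw [h] at hw
    exact hw
  · rintro ⟨I, h1, h2⟩
    ext w
    simp only [Set.mem_empty_iff_false, iff_false]
    intro hw
    obtain ⟨u, β, ν, hacc⟩ := (SafetyAux.nonempty_iff_accept M).mp ⟨w, hw⟩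
    exact h2 β ν (h1 u β ν hacc.1) u hacc
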